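/- Let b : ℝ → ℝ be continuous with b(y) ≥ 0 for all y ∈ [0,1) and b(y) ≤ 0 for all y ∈ (−1,0]. Let k ≥ 1 be an integer, let 0 = S_0 < S_1 < … < S_k be real numbers, let W_1, …, W_{k−1} be real numbers, let ξ : [0,∞) → ℝ be càdlàg with ξ(0) = 0, and define L_t := ξ_t + ∑_{1 ≤ i ≤ k−1, S_i ≤ t} W_i. Let ε > 0, x ∈ (−1,1), and let X : [0,∞) → ℝ be a càdlàg solution of the pathwise equation X_t = x − ∫_0^t b(X_s) ds + ε·L_t for all t ≥ 0. If T ≥ 0 is such that |X_s| < 1 for all s ∈ [0, min(S_k, T)), then sup_{t < min(S_k, T)} |X_t| ≤ |x| + ∑_{i=1}^{k−1} |ε·W_i| + 2·sup_{t∈[0,T]} |ε·ξ_t|. -/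

import Mathlib

open Filter MeasureTheory Set Topology

/-- A real function on `[0,∞)` (modeled as a function on `ℝ`, constrained only on `[0,∞)`)
is càdlàg: right-continuous at every `t ≥ 0` and with left limits at every `t > 0`. -/
def IsCadlag (f : ℝ → ℝ) : Prop :=
  (∀ t ≥ (0 : ℝ), ContinuousWithinAt f (Set.Ici t) t) ∧
  (∀ t > (0 : ℝ), ∃ c : ℝ, Tendsto f (nhdsWithin t (Set.Iio t)) (nhds c))

lemma IsCadlag.neg' {f : ℝ → ℝ} (h : IsCadlag f) : IsCadlag (fun s => -f s) :=
  ⟨fun t ht => (h.1 t ht).neg, fun t ht => (h.2 t ht).elim fun c hc => ⟨-c, hc.neg⟩⟩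

lemma IsCadlag.aemeasurable {f : ℝ → ℝ} (hf : IsCadlag f) {A : Set ℝ}
    (hA : A ⊆ Set.Ici 0) (hA2 : MeasurableSet A) : AEMeasurable f (MeasureTheory.volume.restrict A) := by
  set g : ℕ → ℝ → ℝ := fun n s => f ((⌈s * 2 ^ n⌉ : ℤ) / 2 ^ n) with hg
  have hgm : ∀ n, Measurable (g n) := by
    intro n
    exact (measurable_of_countable (fun i : ℤ => f ((i : ℝ) / 2 ^ n))).comp
      (Int.measurable_ceil.comp (measurable_id.mul_const _))
  have htend : ∀ s ∈ A, Tendsto (fun n => g n s) atTop (𝓝 (f s)) := by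
    intro s hs
    have h1 : ∀ n, s ≤ (⌈s * 2 ^ n⌉ : ℤ) / 2 ^ n := by
      intro n
      rw [le_div_iff₀ (by positivity)]
      exact Int.le_ceil _
    have h2 : ∀ n : ℕ, ((⌈s * 2 ^ n⌉ : ℤ) / 2 ^ n : ℝ) ≤ s + (2 ^ n)⁻¹ := by
      intro n
      rw [div_le_iff₀ (by positivity)]
      have := Int.ceil_lt_add_one (s * 2 ^ n)
      calc ((⌈s * 2 ^ n⌉ : ℤ) : ℝ) ≤ s * 2 ^ n + 1 := by linarith
        _ = (s + (2 ^ n)⁻¹) * 2 ^ n := by field_simp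
    have ha : Tendsto (fun n : ℕ => ((⌈s * 2 ^ n⌉ : ℤ) / 2 ^ n : ℝ)) atTop (𝓝[Set.Ici s] s) := by
      apply tendsto_nhdsWithin_of_tendsto_nhds_of_eventually_within
      · have hup : Tendsto (fun n : ℕ => s + ((2:ℝ) ^ n)⁻¹) atTop (𝓝 s) := by
          have : Tendsto (fun n : ℕ => ((2:ℝ) ^ n)⁻¹) atTop (𝓝 0) := by
            simp_rw [← inv_pow]
            exact tendsto_pow_atTop_nhds_zero_of_lt_one (by norm_num) (by norm_num)
          simpa using tendsto_const_nhds.add this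
        exact tendsto_of_tendsto_of_tendsto_of_le_of_le tendsto_const_nhds hup h1 h2
      · exact Eventually.of_forall h1
    exact ((hf.1 s (hA hs)).tendsto).comp ha
  exact aemeasurable_of_tendsto_metrizable_ae' (fun n => (hgm n).aemeasurable)
    (by filter_upwards [MeasureTheory.ae_restrict_mem hA2] with s hs using htend s hs)

lemma IsCadlag.exists_bound {f : ℝ → ℝ} (hf : IsCadlag f) (T : ℝ) :
    ∃ M : ℝ, ∀ s ∈ Set.Icc (0:ℝ) T, |f s| ≤ M := by
  have hcompact : IsCompact (Set.Icc (0:ℝ) T) := isCompact_Icc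
  have := hcompact.induction_on (p := fun U => ∃ M : ℝ, ∀ s ∈ U, |f s| ≤ M)
    ⟨0, by simp⟩
    (fun s t hst ⟨M, hM⟩ => ⟨M, fun u hu => hM u (hst hu)⟩)
    (fun s t ⟨M, hM⟩ ⟨N, hN⟩ => ⟨max M N, fun u hu => hu.elim
      (fun h => (hM u h).trans (le_max_left _ _))
      (fun h => (hN u h).trans (le_max_right _ _))⟩)
    ?_
  · exact this
  intro x hx
  have hright : ∀ᶠ s in 𝓝[Set.Ici x] x, |f s| ≤ |f x| + 1 := by
    have h1 : Tendsto (fun s => |f s|) (𝓝[Set.Ici x] x) (𝓝 |f x|) :=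
      (continuous_abs.tendsto _).comp (hf.1 x hx.1)
    exact h1.eventually_le_const (by linarith [abs_nonneg (f x)])
  rcases eq_or_lt_of_le hx.1 with h0 | h0
  · -- x = 0
    refine ⟨{s | |f s| ≤ |f x| + 1}, ?_, ⟨|f x| + 1, fun s hs => hs⟩⟩
    have : 𝓝[Set.Icc (0:ℝ) T] x ≤ 𝓝[Set.Ici x] x := by
      apply nhdsWithin_mono
      intro u hu; rw [← h0]; exact hu.1
    exact this hright
  · obtain ⟨c, hc⟩ := hf.2 x h0
    have hleft : ∀ᶠ s in 𝓝[Set.Iio x] x, |f s| ≤ |c| + 1 := by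
      have h1 : Tendsto (fun s => |f s|) (𝓝[Set.Iio x] x) (𝓝 |c|) :=
        (continuous_abs.tendsto _).comp hc
      exact h1.eventually_le_const (by linarith [abs_nonneg c])
    set M := max (|f x| + 1) (|c| + 1) with hM
    refine ⟨{s | |f s| ≤ M}, ?_, ⟨M, fun s hs => hs⟩⟩
    apply nhdsWithin_le_nhds
    have hwhole : 𝓝 x = 𝓝[Set.Iio x] x ⊔ 𝓝[Set.Ici x] x := (nhdsLT_sup_nhdsGE x).symm
    rw [hwhole, mem_sup]
    constructor
    · exact hleft.mono fun s hs => hs.trans (le_max_right _ _)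
    · exact hright.mono fun s hs => hs.trans (le_max_left _ _)

lemma core_upper (b : ℝ → ℝ) (hb : Continuous b)
    (hb1 : ∀ y ∈ Set.Ico (0 : ℝ) 1, 0 ≤ b y)
    (k : ℕ) (S : ℕ → ℝ) (hS0 : S 0 = 0)
    (hSmono : ∀ i < k, S i < S (i + 1))
    (W : ℕ → ℝ) (ξ : ℝ → ℝ) (hξ : IsCadlag ξ) (hξ0 : ξ 0 = 0)
    (L : ℝ → ℝ)
    (hLdef : ∀ t : ℝ, L t = ξ t + ∑ i ∈ Finset.Ico 1 k, if S i ≤ t then W i else 0)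
    (ε : ℝ) (x : ℝ)
    (X : ℝ → ℝ) (hX : IsCadlag X)
    (hXeq : ∀ t ≥ (0 : ℝ), X t = x - (∫ s in (0 : ℝ)..t, b (X s)) + ε * L t)
    (T : ℝ)
    (hbound : ∀ s ∈ Set.Ico (0 : ℝ) (min (S k) T), |X s| < 1)
    (M : ℝ) (hM0 : 0 ≤ M) (hM : ∀ s ∈ Set.Icc (0:ℝ) T, |ε * ξ s| ≤ M) :
    ∀ t ∈ Set.Ico (0:ℝ) (min (S k) T),
      X t ≤ |x| + (∑ i ∈ Finset.Ico 1 k, |ε * W i|) + 2 * M := by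
  intro t ht
  obtain ⟨ht0, htm⟩ := ht
  have htT : t ≤ T := le_of_lt (lt_of_lt_of_le htm (min_le_right _ _))
  have hJ : 0 ≤ ∑ i ∈ Finset.Ico 1 k, |ε * W i| := Finset.sum_nonneg fun i _ => abs_nonneg _
  have hSpos : ∀ i ∈ Finset.Ico 1 k, 0 < S i := by
    intro i hi
    rw [Finset.mem_Ico] at hi
    have key : ∀ n : ℕ, 1 ≤ n → n ≤ k → 0 < S n := by
      intro n
      induction n with
      | zero => omega
      | succ m ih =>
        intro _ hle
        have hlt : S m < S (m + 1) := hSmono m (by omega)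
        rcases Nat.eq_zero_or_pos m with h | h
        · subst h; rwa [hS0] at hlt
        · exact lt_trans (ih h (by omega)) hlt
    exact key i hi.1 (le_of_lt hi.2)
  have hL0 : L 0 = 0 := by
    rw [hLdef 0, hξ0, Finset.sum_eq_zero, add_zero]
    intro i hi
    exact if_neg (not_le.2 (hSpos i hi))
  have hX0 : X 0 = x := by
    have h := hXeq 0 le_rfl
    rwa [intervalIntegral.integral_same, hL0, mul_zero, sub_zero, add_zero] at h
  have hXIcc : ∀ s ∈ Set.Icc (0:ℝ) t, X s ∈ Set.Icc (-1:ℝ) 1 := by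
    intro s hs
    have h := hbound s ⟨hs.1, lt_of_le_of_lt hs.2 htm⟩
    exact Set.mem_Icc.2 (abs_le.1 h.le)
  obtain ⟨Cb, hCb⟩ := (isCompact_Icc (a := (-1:ℝ)) (b := 1)).exists_bound_of_continuousOn
    hb.continuousOn
  have hmeasX : AEMeasurable X (volume.restrict (Set.Icc 0 t)) :=
    hX.aemeasurable (fun u hu => hu.1) measurableSet_Icc
  have hIntOn : IntegrableOn (fun s => b (X s)) (Set.Icc 0 t) volume := by
    refine Integrable.mono' (integrable_const Cb)
      ((hb.measurable.comp_aemeasurable hmeasX).aestronglyMeasurable) ?_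
    filter_upwards [ae_restrict_mem measurableSet_Icc] with s hs
    exact hCb _ (hXIcc s hs)
  have hII : ∀ u v : ℝ, u ∈ Set.Icc (0:ℝ) t → v ∈ Set.Icc (0:ℝ) t →
      IntervalIntegrable (fun s => b (X s)) volume u v := fun u v hu hv =>
    (hIntOn.mono_set (Set.uIcc_subset_Icc hu hv)).intervalIntegrable
  by_cases hXt : X t ≤ 0
  · linarith [abs_nonneg x]
  push_neg at hXt
  set A := {s : ℝ | s ∈ Set.Icc (0:ℝ) t ∧ (X s ≤ 0 ∨ s = 0)} with hAdef
  have hA0 : (0:ℝ) ∈ A := ⟨⟨le_rfl, ht0⟩, Or.inr rfl⟩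
  have hAbdd : BddAbove A := ⟨t, fun s hs => hs.1.2⟩
  set r := sSup A with hrdef
  have hrt : r ≤ t := csSup_le ⟨0, hA0⟩ fun s hs => hs.1.2
  have hr0 : 0 ≤ r := le_csSup hAbdd hA0
  have hrT : r ≤ T := le_trans hrt htT
  have hpos : ∀ u ∈ Set.Ioc r t, 0 < X u := by
    intro u hu
    by_contra h
    push_neg at h
    have hmem : u ∈ A := ⟨⟨le_trans hr0 hu.1.le, hu.2⟩, Or.inl h⟩
    exact absurd (le_csSup hAbdd hmem) (not_le.2 hu.1)
  have hDnn : 0 ≤ ∫ s in r..t, b (X s) := by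
    rw [intervalIntegral.integral_of_le hrt]
    refine setIntegral_nonneg measurableSet_Ioc fun u hu => ?_
    refine hb1 _ ⟨(hpos u hu).le, ?_⟩
    have h := hbound u ⟨le_trans hr0 hu.1.le, lt_of_le_of_lt hu.2 htm⟩
    exact lt_of_le_of_lt (le_abs_self _) h
  have hsplit : (∫ s in (0:ℝ)..t, b (X s))
      = (∫ s in (0:ℝ)..r, b (X s)) + ∫ s in r..t, b (X s) :=
    (intervalIntegral.integral_add_adjacent_intervals (hII 0 r ⟨le_rfl, ht0⟩ ⟨hr0, hrt⟩)
      (hII r t ⟨hr0, hrt⟩ ⟨ht0, le_rfl⟩)).symm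
  have hξtM : |ε * ξ t| ≤ M := hM t ⟨ht0, htT⟩
  have habs1 : ε * ξ t ≤ M := le_trans (le_abs_self _) hξtM
  have e1 : X t = x - ((∫ s in (0:ℝ)..r, b (X s)) + ∫ s in r..t, b (X s))
      + ε * (ξ t + ∑ i ∈ Finset.Ico 1 k, if S i ≤ t then W i else 0) := by
    rw [← hsplit, ← hLdef]; exact hXeq t ht0
  by_cases hXr : X r ≤ |x|
  · -- case I : use value at r itself
    have e2 : X r = x - (∫ s in (0:ℝ)..r, b (X s))
        + ε * (ξ r + ∑ i ∈ Finset.Ico 1 k, if S i ≤ r then W i else 0) := by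
      rw [← hLdef]; exact hXeq r hr0
    have hξrM : |ε * ξ r| ≤ M := hM r ⟨hr0, hrT⟩
    have habs2 : -(ε * ξ r) ≤ M := le_trans (neg_le_abs _) hξrM
    have hsum' : ε * (∑ i ∈ Finset.Ico 1 k, if S i ≤ t then W i else 0)
        - ε * (∑ i ∈ Finset.Ico 1 k, if S i ≤ r then W i else 0)
        ≤ ∑ i ∈ Finset.Ico 1 k, |ε * W i| := by
      rw [← mul_sub, ← Finset.sum_sub_distrib, Finset.mul_sum]
      refine Finset.sum_le_sum fun i _ => ?_
      by_cases h1 : S i ≤ r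
      · rw [if_pos h1, if_pos (le_trans h1 hrt)]; simp; positivity
      · rw [if_neg h1]
        by_cases h2 : S i ≤ t
        · rw [if_pos h2, sub_zero]; exact le_abs_self _
        · rw [if_neg h2]; simp; positivity
    rw [mul_add] at e1 e2
    linarith
  · push_neg at hXr
    have hrpos : 0 < r := by
      rcases eq_or_lt_of_le hr0 with h | h
      · exfalso
        rw [← h, hX0] at hXr
        exact absurd hXr (not_lt.2 (le_abs_self x))
      · exact h
    obtain ⟨c, hc⟩ := hX.2 r hrpos
    obtain ⟨l, hl⟩ := hξ.2 r hrpos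
    have hcle : c ≤ 0 := by
      by_contra h
      push_neg at h
      have hev : ∀ᶠ s in 𝓝[Set.Iio r] r, 0 < X s := hc.eventually (eventually_gt_nhds h)
      rw [eventually_nhdsWithin_iff, Metric.eventually_nhds_iff] at hev
      obtain ⟨δ, hδ, hδ'⟩ := hev
      have hη0 : 0 < min δ r := lt_min hδ hrpos
      obtain ⟨s, hsA, hs⟩ := exists_lt_of_lt_csSup ⟨0, hA0⟩
        (show r - min δ r / 2 < r by linarith)
      have hsr : s ≤ r := le_csSup hAbdd hsA
      have hs0 : 0 < s := by
        have h6 : min δ r ≤ r := min_le_right _ _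
        linarith
      have hXs : X s ≤ 0 := hsA.2.elim id fun h' => absurd h' (ne_of_gt hs0)
      have hslt : s < r := lt_of_le_of_ne hsr fun h' => by
        rw [h'] at hXs
        linarith [lt_of_le_of_lt (abs_nonneg x) hXr]
      have h7 : dist s r < δ := by
        rw [Real.dist_eq, abs_of_nonpos (by linarith)]
        have h6 : min δ r ≤ δ := min_le_left _ _
        linarith
      have := hδ' h7 hslt
      linarith
    have hlM : |ε * l| ≤ M := by
      have h4 : Tendsto (fun s => |ε * ξ s|) (𝓝[Set.Iio r] r) (𝓝 |ε * l|) :=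
        (continuous_abs.tendsto _).comp (hl.const_mul ε)
      refine le_of_tendsto h4 ?_
      filter_upwards [Ioo_mem_nhdsLT hrpos] with s hs
      exact hM s ⟨hs.1.le, le_trans hs.2.le hrT⟩
    set Sr := ∑ i ∈ Finset.Ico 1 k, if S i < r then W i else 0 with hSrdef
    have hcontD : Tendsto (fun s => ∫ u in (0:ℝ)..s, b (X u)) (𝓝[Set.Iio r] r)
        (𝓝 (∫ u in (0:ℝ)..r, b (X u))) := by
      have hco : ContinuousOn (fun s => ∫ u in (0:ℝ)..s, b (X u)) (Set.Icc 0 t) := by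
        have h5 := intervalIntegral.continuousOn_primitive_interval (a := 0) (b := t)
          (μ := volume) (f := fun s => b (X s)) (by rwa [Set.uIcc_of_le ht0])
        rwa [Set.uIcc_of_le ht0] at h5
      have hcw := hco r ⟨hr0, hrt⟩
      rw [← nhdsWithin_Ioo_eq_nhdsLT hrpos]
      exact hcw.mono_left (nhdsWithin_mono _ fun u hu => ⟨hu.1.le, le_trans hu.2.le hrt⟩)
    have hsum_ev : ∀ᶠ s in 𝓝[Set.Iio r] r,
        (∑ i ∈ Finset.Ico 1 k, if S i ≤ s then W i else 0) = Sr := by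
      have hall : ∀ i ∈ Finset.Ico 1 k, ∀ᶠ s in 𝓝[Set.Iio r] r,
          (if S i ≤ s then W i else 0) = (if S i < r then W i else 0) := by
        intro i _
        by_cases hi : S i < r
        · filter_upwards [Ioo_mem_nhdsLT_of_mem (show r ∈ Set.Ioc (S i) r from ⟨hi, le_rfl⟩)]
            with s hs
          rw [if_pos hs.1.le, if_pos hi]
        · push_neg at hi
          filter_upwards [self_mem_nhdsWithin] with s hs
          rw [if_neg (not_le.2 (lt_of_lt_of_le hs hi)), if_neg (not_lt.2 hi)]
      filter_upwards [(eventually_all_finset _).2 hall] with s hs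
      exact Finset.sum_congr rfl hs
    have hXtend : Tendsto X (𝓝[Set.Iio r] r)
        (𝓝 (x - (∫ u in (0:ℝ)..r, b (X u)) + ε * (l + Sr))) := by
      have hg : Tendsto (fun s => x - (∫ u in (0:ℝ)..s, b (X u))
          + ε * (ξ s + ∑ i ∈ Finset.Ico 1 k, if S i ≤ s then W i else 0)) (𝓝[Set.Iio r] r)
          (𝓝 (x - (∫ u in (0:ℝ)..r, b (X u)) + ε * (l + Sr))) := by
        refine Tendsto.add (tendsto_const_nhds.sub hcontD) (Tendsto.const_mul ε (hl.add ?_))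
        exact Tendsto.congr' (hsum_ev.mono fun s h => h.symm) tendsto_const_nhds
      refine Tendsto.congr' ?_ hg
      filter_upwards [Ioo_mem_nhdsLT hrpos] with s hs
      have h8 := hXeq s hs.1.le
      rw [hLdef] at h8
      exact h8.symm
    have hceq : c = x - (∫ u in (0:ℝ)..r, b (X u)) + ε * (l + Sr) :=
      tendsto_nhds_unique hc hXtend
    have hsum' : ε * (∑ i ∈ Finset.Ico 1 k, if S i ≤ t then W i else 0) - ε * Sr
        ≤ ∑ i ∈ Finset.Ico 1 k, |ε * W i| := by
      rw [hSrdef, ← mul_sub, ← Finset.sum_sub_distrib, Finset.mul_sum]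
      refine Finset.sum_le_sum fun i _ => ?_
      by_cases h1 : S i < r
      · rw [if_pos h1, if_pos (le_trans h1.le hrt)]; simp; positivity
      · rw [if_neg h1]
        by_cases h2 : S i ≤ t
        · rw [if_pos h2, sub_zero]; exact le_abs_self _
        · rw [if_neg h2]; simp; positivity
    have habs2 : -(ε * l) ≤ M := le_trans (neg_le_abs _) hlM
    rw [mul_add] at e1 hceq
    linarith [abs_nonneg x]

/-- **Corollary 3.1(ii), pathwise form.** If the driving noise is the sum of a small-jump part
`ξ` and a compound-Poisson-type part with jump times `S 1 < … < S (k-1)` and jump sizes `W i`,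
and the solution of `X t = x - ∫_0^t b (X s) ds + ε·L t` stays in `(-1,1)` before
`min (S k) T`, then `sup_{t < min (S k) T} |X t| ≤ |x| + ∑_{i=1}^{k-1} |ε·W i|
+ 2·sup_{[0,T]} |ε·ξ|`. -/
theorem sup_before_kth_jump_estimate (b : ℝ → ℝ) (hb : Continuous b)
    (hb1 : ∀ y ∈ Set.Ico (0 : ℝ) 1, 0 ≤ b y)
    (hb2 : ∀ y ∈ Set.Ioc (-1 : ℝ) 0, b y ≤ 0)
    (k : ℕ) (hk : 1 ≤ k) (S : ℕ → ℝ) (hS0 : S 0 = 0)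
    (hSmono : ∀ i < k, S i < S (i + 1))
    (W : ℕ → ℝ) (ξ : ℝ → ℝ) (hξ : IsCadlag ξ) (hξ0 : ξ 0 = 0)
    (L : ℝ → ℝ)
    (hLdef : ∀ t : ℝ, L t = ξ t + ∑ i ∈ Finset.Ico 1 k, if S i ≤ t then W i else 0)
    (ε : ℝ) (hε : 0 < ε) (x : ℝ) (hx : x ∈ Set.Ioo (-1 : ℝ) 1)
    (X : ℝ → ℝ) (hX : IsCadlag X)
    (hXeq : ∀ t ≥ (0 : ℝ), X t = x - (∫ s in (0 : ℝ)..t, b (X s)) + ε * L t)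
    (T : ℝ) (hT : 0 ≤ T)
    (hbound : ∀ s ∈ Set.Ico (0 : ℝ) (min (S k) T), |X s| < 1) :
    sSup ((fun t => |X t|) '' Set.Ico 0 (min (S k) T)) ≤
      |x| + (∑ i ∈ Finset.Ico 1 k, |ε * W i|) +
        2 * sSup ((fun t => |ε * ξ t|) '' Set.Icc 0 T) := by
  obtain ⟨M0, hM0'⟩ := hξ.exists_bound T
  have hbddM : BddAbove ((fun t => |ε * ξ t|) '' Set.Icc 0 T) := by
    refine ⟨|ε| * M0, ?_⟩
    rintro y ⟨s, hs, rfl⟩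
    show |ε * ξ s| ≤ |ε| * M0
    rw [abs_mul]
    exact mul_le_mul_of_nonneg_left (hM0' s hs) (abs_nonneg ε)
  set M := sSup ((fun t => |ε * ξ t|) '' Set.Icc 0 T) with hMdef
  have hMmem : ∀ s ∈ Set.Icc (0:ℝ) T, |ε * ξ s| ≤ M := fun s hs =>
    le_csSup hbddM ⟨s, hs, rfl⟩
  have hM0 : 0 ≤ M := le_trans (abs_nonneg _) (hMmem 0 ⟨le_rfl, hT⟩)
  have upper := core_upper b hb hb1 k S hS0 hSmono W ξ hξ hξ0 L hLdef ε x X hX hXeq T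
    hbound M hM0 hMmem
  have hb1' : ∀ y ∈ Set.Ico (0:ℝ) 1, 0 ≤ -b (-y) := by
    intro y hy
    have h : -y ∈ Set.Ioc (-1:ℝ) 0 := ⟨by linarith [hy.2], by linarith [hy.1]⟩
    linarith [hb2 _ h]
  have hLdef' : ∀ t : ℝ, -L t = -ξ t + ∑ i ∈ Finset.Ico 1 k, if S i ≤ t then -W i else 0 := by
    intro t
    rw [hLdef t, neg_add]
    congr 1
    rw [← Finset.sum_neg_distrib]
    exact Finset.sum_congr rfl fun i _ => by split_ifs <;> simp
  have hXeq' : ∀ t ≥ (0:ℝ), -X t = -x - (∫ s in (0:ℝ)..t, -b (-(-X s))) + ε * (-L t) := by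
    intro t htt
    have h1 : (∫ s in (0:ℝ)..t, -b (-(-X s))) = -∫ s in (0:ℝ)..t, b (X s) := by
      simp [intervalIntegral.integral_neg]
    rw [h1, mul_neg]
    have h2 := hXeq t htt
    linarith
  have hbound' : ∀ s ∈ Set.Ico (0:ℝ) (min (S k) T), |(-X s)| < 1 := by
    intro s hs; rw [abs_neg]; exact hbound s hs
  have hMmem' : ∀ s ∈ Set.Icc (0:ℝ) T, |ε * (-ξ s)| ≤ M := by
    intro s hs; rw [mul_neg, abs_neg]; exact hMmem s hs
  have lower := core_upper (fun y => -b (-y)) ((hb.comp continuous_neg).neg) hb1' k S hS0 hSmono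
    (fun i => -W i) (fun s => -ξ s) hξ.neg' (by simp [hξ0]) (fun s => -L s) hLdef'
    ε (-x) (fun s => -X s) hX.neg' hXeq' T hbound' M hM0 hMmem'
  refine Real.sSup_le ?_ ?_
  · rintro y ⟨s, hs, rfl⟩
    have h1 := upper s hs
    have h2 := lower s hs
    simp only [abs_neg, mul_neg] at h2
    show |X s| ≤ _
    rw [abs_le]
    exact ⟨by linarith, by linarith⟩
  · have hJ : 0 ≤ ∑ i ∈ Finset.Ico 1 k, |ε * W i| :=
      Finset.sum_nonneg fun i _ => abs_nonneg _
    linarith [abs_nonneg x]
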